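/- In any domino tiling of the Aztec diamond of order n, each square along the spine either shares its domino with the square to its left or above (compatible only with a zag), or shares its domino with the square to its right or below (compatible only with a zig); hence each tiling is compatible with exactly one full assignment of zigs and zags to all spine squares. -/

import Mathlib

/-- The Aztec diamond of order `n`: the set of unit squares, indexed by their
lower-left corners `(i, j) ∈ ℤ²` (so the square has center `(i+1/2, j+1/2)`),
satisfying `|i + 1/2| + |j + 1/2| ≤ n`. -/
def aztec (n : ℕ) : Set (ℤ × ℤ) :=
  {p | |2 * p.1 + 1| + |2 * p.2 + 1| ≤ 2 * n}

/-- A domino tiling of the Aztec diamond of order `n`, encoded as the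
involution sending each square to the other square of its domino. -/
structure Tiling (n : ℕ) where
  t : ℤ × ℤ → ℤ × ℤ
  mem_aztec : ∀ p ∈ aztec n, t p ∈ aztec n
  adj : ∀ p ∈ aztec n, |(t p).1 - p.1| + |(t p).2 - p.2| = 1
  invol : ∀ p ∈ aztec n, t (t p) = p
  eq_of_not_mem : ∀ p ∉ aztec n, t p = p

/-- Auxiliary: a diagonal square strictly inside the diamond has its domino
partner in exactly one of the two half-neighborhoods. -/
lemma spine_xor (n : ℕ) (T : Tiling n) (i : ℤ) (hi : |2 * i + 1| ≤ (n : ℤ)) :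
    Xor' (T.t (i, i) = (i - 1, i) ∨ T.t (i, i) = (i, i + 1))
         (T.t (i, i) = (i + 1, i) ∨ T.t (i, i) = (i, i - 1)) := by
  have hmem : (i, i) ∈ aztec n := by
    simp only [aztec, Set.mem_setOf_eq]
    omega
  have hadj := T.adj (i, i) hmem
  obtain ⟨a, b, hab⟩ : ∃ a b : ℤ, T.t (i, i) = (a, b) := ⟨_, _, rfl⟩
  rw [hab] at hadj ⊢
  simp only [Prod.fst, Prod.snd] at hadj
  have ha := abs_choice (a - i)
  have hb := abs_choice (b - i)
  have ha0 := abs_nonneg (a - i)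
  have hb0 := abs_nonneg (b - i)
  simp only [Xor', Xor, Prod.mk.injEq]
  omega

theorem unique_barrier_assignment (n : ℕ) (hn : 0 < n) (T : Tiling n) :
    (∀ m : Fin (2 * ((n + 1) / 2)),
      (fun i : ℤ =>
        Xor' (T.t (i, i) = (i - 1, i) ∨ T.t (i, i) = (i, i + 1))
             (T.t (i, i) = (i + 1, i) ∨ T.t (i, i) = (i, i - 1)))
      ((m : ℤ) - ((n + 1) / 2 : ℕ)))
    ∧ ∃! z : Fin (2 * ((n + 1) / 2)) → Bool,
        ∀ m : Fin (2 * ((n + 1) / 2)),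
          (fun i : ℤ =>
            if z m then
              T.t (i, i) ≠ (i, i - 1) ∧ T.t (i, i) ≠ (i + 1, i)
            else
              T.t (i, i) ≠ (i - 1, i) ∧ T.t (i, i) ≠ (i, i + 1))
          ((m : ℤ) - ((n + 1) / 2 : ℕ)) := by
  classical
  have hxor : ∀ m : Fin (2 * ((n + 1) / 2)),
      (fun i : ℤ =>
        Xor' (T.t (i, i) = (i - 1, i) ∨ T.t (i, i) = (i, i + 1))
             (T.t (i, i) = (i + 1, i) ∨ T.t (i, i) = (i, i - 1)))
      ((m : ℤ) - ((n + 1) / 2 : ℕ)) := by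
    intro m
    apply spine_xor
    have hm := m.isLt
    have h0 := abs_choice (2 * ((m : ℤ) - ((n + 1) / 2 : ℕ)) + 1)
    omega
  refine ⟨hxor, ?_⟩
  refine ⟨fun m =>
    decide (T.t (((m : ℤ) - ((n + 1) / 2 : ℕ)), ((m : ℤ) - ((n + 1) / 2 : ℕ))) =
        (((m : ℤ) - ((n + 1) / 2 : ℕ)) - 1, ((m : ℤ) - ((n + 1) / 2 : ℕ))) ∨
      T.t (((m : ℤ) - ((n + 1) / 2 : ℕ)), ((m : ℤ) - ((n + 1) / 2 : ℕ))) =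
        (((m : ℤ) - ((n + 1) / 2 : ℕ)), ((m : ℤ) - ((n + 1) / 2 : ℕ)) + 1)), ?_, ?_⟩
  · intro m
    rcases hxor m with ⟨hP, hQ⟩ | ⟨hQ, hP⟩
    · simp only [decide_eq_true hP, if_true]
      push_neg at hQ
      exact ⟨hQ.2, hQ.1⟩
    · simp only [decide_eq_false hP, if_false]
      push_neg at hP
      exact hP
  · intro z' hz'
    funext m
    have h := hz' m
    simp only at h
    rcases hxor m with ⟨hP, hQ⟩ | ⟨hQ, hP⟩
    · simp only [decide_eq_true hP]
      cases h0 : z' m with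
      | true => rfl
      | false =>
        rw [h0, if_neg (by simp)] at h
        exact absurd hP (by push_neg; exact h)
    · simp only [decide_eq_false hP]
      cases h0 : z' m with
      | false => rfl
      | true =>
        rw [h0, if_pos rfl] at h
        exact absurd hQ (by push_neg; exact ⟨h.2, h.1⟩)
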